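/- Let E be a topological graph and fix n ≥ 1. Then r^n(B^n) = V_n and B^n = (r^n)^{-1}(V_n). -/

import Mathlib

/-- A topological graph: vertex space `V`, edge space `E`, continuous range map `r`
and locally homeomorphic source map `s`. -/
structure TopGraph (V E : Type) [TopologicalSpace V] [TopologicalSpace E] where
  r : E → V
  s : E → V
  r_cont : Continuous r
  s_locHomeo : IsLocalHomeomorph s

namespace TopGraph

variable {V E : Type} [TopologicalSpace V] [TopologicalSpace E] (G : TopGraph V E)

/-- The predicate that `μ : Fin n → E` is a (finite) path. -/
def IsPathFn {n : ℕ} (μ : Fin n → E) : Prop :=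
  ∀ (i : ℕ) (h : i + 1 < n), G.s (μ ⟨i, Nat.lt_of_succ_lt h⟩) = G.r (μ ⟨i + 1, h⟩)

/-- The space `E^n` of paths of length `n`, with the subspace topology of the product. -/
def Path (n : ℕ) : Type := {μ : Fin n → E // G.IsPathFn μ}

instance (n : ℕ) : TopologicalSpace (G.Path n) :=
  inferInstanceAs (TopologicalSpace {μ : Fin n → E // G.IsPathFn μ})

/-- `r^n(μ) = r(μ₁)`. -/
def pathRange {n : ℕ} (hn : 0 < n) (μ : G.Path n) : V := G.r (μ.1 ⟨0, hn⟩)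

/-- `s^n(μ) = s(μₙ)`. -/
def pathSource {n : ℕ} (hn : 0 < n) (μ : G.Path n) : V :=
  G.s (μ.1 ⟨n - 1, Nat.sub_lt hn Nat.one_pos⟩)

/-- A cycle is a path whose range equals its source; its base point is its range. -/
def IsCycle {n : ℕ} (hn : 0 < n) (μ : G.Path n) : Prop :=
  G.pathRange hn μ = G.pathSource hn μ

/-- A path `μ ∈ E^n` has an entrance if some edge `e ≠ μᵢ` has `r(e) = r(μᵢ)`. -/
def HasEntrance {n : ℕ} (μ : G.Path n) : Prop :=
  ∃ (i : Fin n) (e : E), G.r e = G.r (μ.1 i) ∧ e ≠ μ.1 i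

theorem block_lt {n k : ℕ} (j : Fin k) (i : Fin n) : (j : ℕ) * n + (i : ℕ) < k * n := by
  have hi := i.2
  have hj := j.2
  calc (j : ℕ) * n + (i : ℕ) < ((j : ℕ) + 1) * n := by rw [Nat.add_mul, Nat.one_mul]; omega
    _ ≤ k * n := Nat.mul_le_mul (Nat.succ_le_of_lt hj) le_rfl

/-- The `j`-th block of length `n` of a path of length `k * n`. -/
def block {n k : ℕ} (α : G.Path (k * n)) (j : Fin k) : G.Path n :=
  ⟨fun i => α.1 ⟨(j : ℕ) * n + (i : ℕ), block_lt j i⟩,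
    fun i h => α.2 ((j : ℕ) * n + i) (block_lt j ⟨i + 1, h⟩)⟩

/-- `α ∈ kN` : every block of `α` lies in `N`. -/
def BlocksIn {n k : ℕ} (N : Set (G.Path n)) (α : G.Path (k * n)) : Prop :=
  ∀ j : Fin k, G.block α j ∈ N

/-- The set `B^n` of cycles of length `n` admitting `k ≥ 1` and an open neighbourhood `N`
satisfying conditions (1) and (2) of Notation 3.3. -/
def B (n : ℕ) (hn : 0 < n) : Set (G.Path n) :=
  {μ | G.IsCycle hn μ ∧
    ∃ (k : ℕ) (hk : 0 < k) (N : Set (G.Path n)), IsOpen N ∧ μ ∈ N ∧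
      (∀ α β : G.Path (k * n), G.BlocksIn N α → G.BlocksIn N β → α ≠ β →
        ¬ ∃ γ ∈ N, G.pathRange hn γ = G.pathSource (Nat.mul_pos hk hn) α ∧
          G.pathSource hn γ = G.pathSource (Nat.mul_pos hk hn) β) ∧
      (∀ α : G.Path (k * n), G.BlocksIn N α →
        ¬ ∃ γ ∈ N, G.IsCycle hn γ ∧ G.HasEntrance γ ∧
          G.pathRange hn γ = G.pathSource (Nat.mul_pos hk hn) α)}

/-- The infinite path space `E^∞`, with the subspace topology of the product. -/
def InfPath : Type := {x : ℕ → E // ∀ i : ℕ, G.s (x i) = G.r (x (i + 1))}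

instance : TopologicalSpace G.InfPath :=
  inferInstanceAs (TopologicalSpace {x : ℕ → E // ∀ i : ℕ, G.s (x i) = G.r (x (i + 1))})

/-- The one-sided shift on `E^∞`. -/
def shift (x : G.InfPath) : G.InfPath := ⟨fun i => x.1 (i + 1), fun i => x.2 (i + 1)⟩

/-- The segment `x_{a+1} ⋯ x_{a+len}` (0-indexed: edges `a, …, a+len-1`) of an infinite path. -/
def segment (x : G.InfPath) (a len : ℕ) : G.Path len :=
  ⟨fun i => x.1 (a + (i : ℕ)), fun i _ => x.2 (a + i)⟩

/-- The boundary path groupoid `Γ(E^∞, σ)` as a set. -/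
def Gamma : Type :=
  {g : G.InfPath × ℤ × G.InfPath //
    ∃ k l : ℕ, g.2.1 = (k : ℤ) - (l : ℤ) ∧ G.shift^[k] g.1 = G.shift^[l] g.2.2}

/-- Basic sets `U(U, W, k, l)` for the topology of `Γ(E^∞, σ)`. -/
def basicSet (U W : Set G.InfPath) (k l : ℕ) : Set G.Gamma :=
  {g | g.1.1 ∈ U ∧ g.1.2.2 ∈ W ∧ g.1.2.1 = (k : ℤ) - (l : ℤ) ∧
    G.shift^[k] g.1.1 = G.shift^[l] g.1.2.2}

/-- The topology on `Γ(E^∞, σ)` generated by the sets `U(U, W, k, l)` with `U, W` open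
and `σ^k`, `σ^l` injective on `U` resp. `W`. -/
instance : TopologicalSpace G.Gamma :=
  TopologicalSpace.generateFrom
    {S | ∃ (U W : Set G.InfPath) (k l : ℕ), IsOpen U ∧ IsOpen W ∧
      Set.InjOn (G.shift^[k]) U ∧ Set.InjOn (G.shift^[l]) W ∧ S = G.basicSet U W k l}

/-- The isotropy group bundle `Iso(Γ(E^∞, σ))`. -/
def isoSet : Set G.Gamma := {g | g.1.1 = g.1.2.2}

/-- The interior of the isotropy group bundle. -/
def isoInterior : Set G.Gamma := interior G.isoSet

/-- The set `E^0_fin` of finite receivers. -/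
def finRecv : Set V := {v | ∃ N : Set V, IsOpen N ∧ v ∈ N ∧ IsCompact (G.r ⁻¹' closure N)}

/-- The set `E^0_sce` of sources. -/
def sce : Set V := (closure (Set.range G.r))ᶜ

/-- The set `E^0_rg` of regular vertices. -/
def rg : Set V := G.finRecv \ closure G.sce

/-- The set `E^0_sg` of singular vertices. -/
def sg : Set V := G.rgᶜ

/-- The set `V_n` of vertices having an open neighbourhood consisting of base points of
cycles without entrances in `E^n`. -/
def Vset (n : ℕ) (hn : 0 < n) : Set V :=
  {v | ∃ W : Set V, IsOpen W ∧ v ∈ W ∧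
    ∀ w ∈ W, ∃ γ : G.Path n, G.IsCycle hn γ ∧ ¬ G.HasEntrance γ ∧ G.pathRange hn γ = w}

/-- `E` is topologically free if the set of base points of cycles without entrances has
empty interior. -/
def TopologicallyFree : Prop :=
  interior {v : V | ∃ (n : ℕ) (hn : 0 < n) (γ : G.Path n),
    G.IsCycle hn γ ∧ ¬ G.HasEntrance γ ∧ G.pathRange hn γ = v} = ∅

/-- The groupoid `Γ(E^∞, σ)` is essentially free if the set of units with trivial
isotropy is dense. -/
def EssentiallyFree : Prop :=
  Dense {x : G.InfPath | ∀ g : G.Gamma, g.1.1 = x → g.1.2.2 = x → g.1.2.1 = 0}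

end TopGraph

section AuxStmt2

namespace TopGraph

variable {V E : Type} [TopologicalSpace V] [TopologicalSpace E] (G : TopGraph V E)

lemma fin_app_congr {α : Sort*} {m : ℕ} (x : Fin m → α) {i j : ℕ} (h : i = j)
    (hi : i < m) (hj : j < m) : x ⟨i, hi⟩ = x ⟨j, hj⟩ := by subst h; rfl

lemma continuous_pathRange {n : ℕ} (hn : 0 < n) : Continuous (G.pathRange hn) :=
  G.r_cont.comp ((continuous_apply (⟨0, hn⟩ : Fin n)).comp continuous_subtype_val)

/-- Key lemma: any path starting at the base point of an entrance-free cycle follows the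
cycle periodically. -/
lemma follows_cycle {n : ℕ} (hn : 0 < n) (γ : G.Path n) (hc : G.IsCycle hn γ)
    (hne : ¬ G.HasEntrance γ) {m : ℕ} (x : Fin m → E) (hx : G.IsPathFn x)
    (h0 : ∀ hm : 0 < m, G.r (x ⟨0, hm⟩) = G.pathRange hn γ) :
    ∀ i (hi : i < m), x ⟨i, hi⟩ = γ.1 ⟨i % n, Nat.mod_lt i hn⟩ := by
  have hne' : ∀ (j : Fin n) (e : E), G.r e = G.r (γ.1 j) → e = γ.1 j := by
    intro j e h
    by_contra hne2
    exact hne ⟨j, e, h, hne2⟩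
  intro i
  induction i with
  | zero =>
    intro hi
    refine hne' _ _ ?_
    have := h0 hi
    rw [pathRange] at this
    rw [this]
    exact congrArg _ (congrArg _ (Fin.ext (by simp)))
  | succ i ih =>
    intro hi
    have hi' : i < m := Nat.lt_of_succ_lt hi
    have h1 : G.s (x ⟨i, hi'⟩) = G.r (x ⟨i + 1, hi⟩) := hx i hi
    have h2 := ih hi'
    refine hne' _ _ ?_
    rw [← h1, h2]
    by_cases hcase : i % n + 1 < n
    · have hmod : (i + 1) % n = i % n + 1 := by
        rw [Nat.add_mod, Nat.mod_eq_of_lt (show 1 < n by omega), Nat.mod_eq_of_lt hcase]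
      have := γ.2 (i % n) hcase
      rw [this]
      exact congrArg _ (congrArg _ (Fin.ext (by simp [hmod])))
    · have hin : i % n = n - 1 := by have := Nat.mod_lt i hn; omega
      have hmod : (i + 1) % n = 0 := by
        by_cases h1n : n = 1
        · subst h1n; omega
        · rw [Nat.add_mod, hin, Nat.mod_eq_of_lt (show 1 < n by omega),
            show n - 1 + 1 = n by omega, Nat.mod_self]
      have hsrc : G.s (γ.1 ⟨i % n, Nat.mod_lt i hn⟩) = G.pathSource hn γ := by
        rw [pathSource]
        exact congrArg _ (congrArg _ (Fin.ext (by simp [hin])))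
      rw [hsrc, ← hc, pathRange]
      exact congrArg _ (congrArg _ (Fin.ext (by simp [hmod])))

lemma concat_isPathFn {n k : ℕ} (hn : 0 < n) (g : Fin k → G.Path n)
    (hadj : ∀ (j : ℕ) (hj : j + 1 < k),
      G.pathSource hn (g ⟨j, Nat.lt_of_succ_lt hj⟩) = G.pathRange hn (g ⟨j + 1, hj⟩)) :
    G.IsPathFn (fun i : Fin (k * n) =>
      (g ⟨(i : ℕ) / n, (Nat.div_lt_iff_lt_mul hn).2 i.2⟩).1 ⟨(i : ℕ) % n, Nat.mod_lt _ hn⟩) := by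
  intro i h
  simp only
  have hrlt : i % n < n := Nat.mod_lt _ hn
  have hiq : n * (i / n) + i % n = i := Nat.div_add_mod i n
  have hqk : i / n < k := (Nat.div_lt_iff_lt_mul hn).2 (Nat.lt_of_succ_lt h)
  have hq1k : (i + 1) / n < k := (Nat.div_lt_iff_lt_mul hn).2 h
  by_cases hcase : i % n + 1 < n
  · have hd : (i + 1) / n = i / n := by
      conv_lhs => rw [show i + 1 = n * (i / n) + (i % n + 1) by omega]
      rw [Nat.mul_add_div hn, Nat.div_eq_of_lt hcase, Nat.add_zero]
    have hm : (i + 1) % n = i % n + 1 := by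
      conv_lhs => rw [show i + 1 = n * (i / n) + (i % n + 1) by omega]
      rw [Nat.mul_add_mod, Nat.mod_eq_of_lt hcase]
    rw [fin_app_congr g hd hq1k hqk,
      fin_app_congr (g ⟨i / n, hqk⟩).1 hm (Nat.mod_lt _ hn) hcase]
    exact (g ⟨i / n, hqk⟩).2 (i % n) hcase
  · have hin : i % n = n - 1 := by omega
    have hd : (i + 1) / n = i / n + 1 := by
      conv_lhs => rw [show i + 1 = n * (i / n) + n by omega]
      rw [Nat.mul_add_div hn, Nat.div_self hn]
    have hm0 : (i + 1) % n = 0 := by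
      conv_lhs => rw [show i + 1 = n * (i / n) + n by omega]
      rw [Nat.mul_add_mod, Nat.mod_self]
    have hqk' : i / n + 1 < k := hd ▸ hq1k
    rw [fin_app_congr g hd hq1k hqk',
      fin_app_congr (g ⟨i / n + 1, hqk'⟩).1 hm0 (Nat.mod_lt _ hn) hn,
      fin_app_congr (g ⟨i / n, hqk⟩).1 hin hrlt (Nat.sub_lt hn Nat.one_pos)]
    exact hadj (i / n) hqk'

/-- Concatenation of `k` composable paths of length `n`. -/
def concat {n k : ℕ} (hn : 0 < n) (g : Fin k → G.Path n)
    (hadj : ∀ (j : ℕ) (hj : j + 1 < k),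
      G.pathSource hn (g ⟨j, Nat.lt_of_succ_lt hj⟩) = G.pathRange hn (g ⟨j + 1, hj⟩)) :
    G.Path (k * n) :=
  ⟨_, G.concat_isPathFn hn g hadj⟩

lemma concat_apply {n k : ℕ} (hn : 0 < n) (g : Fin k → G.Path n)
    (hadj : ∀ (j : ℕ) (hj : j + 1 < k),
      G.pathSource hn (g ⟨j, Nat.lt_of_succ_lt hj⟩) = G.pathRange hn (g ⟨j + 1, hj⟩))
    {i : ℕ} (hi : i < k * n) {q r : ℕ} (hq : q < k) (hr : r < n) (he : i = q * n + r) :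
    (G.concat hn g hadj).1 ⟨i, hi⟩ = (g ⟨q, hq⟩).1 ⟨r, hr⟩ := by
  subst he
  have hd : (q * n + r) / n = q := by
    rw [show q * n + r = n * q + r by ring, Nat.mul_add_div hn, Nat.div_eq_of_lt hr,
      Nat.add_zero]
  have hm : (q * n + r) % n = r := by
    rw [show q * n + r = n * q + r by ring, Nat.mul_add_mod, Nat.mod_eq_of_lt hr]
  show (g ⟨(q * n + r) / n, _⟩).1 ⟨(q * n + r) % n, _⟩ = _
  rw [fin_app_congr g hd ((Nat.div_lt_iff_lt_mul hn).2 hi) hq]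
  exact fin_app_congr (g ⟨q, hq⟩).1 hm (Nat.mod_lt _ hn) hr

lemma block_concat {n k : ℕ} (hn : 0 < n) (g : Fin k → G.Path n)
    (hadj : ∀ (j : ℕ) (hj : j + 1 < k),
      G.pathSource hn (g ⟨j, Nat.lt_of_succ_lt hj⟩) = G.pathRange hn (g ⟨j + 1, hj⟩))
    (j : Fin k) : G.block (G.concat hn g hadj) j = g j := by
  apply Subtype.ext
  funext i
  exact G.concat_apply hn g hadj (block_lt j i) j.2 i.2 rfl

lemma pathRange_concat {n k : ℕ} (hn : 0 < n) (hk : 0 < k) (g : Fin k → G.Path n)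
    (hadj : ∀ (j : ℕ) (hj : j + 1 < k),
      G.pathSource hn (g ⟨j, Nat.lt_of_succ_lt hj⟩) = G.pathRange hn (g ⟨j + 1, hj⟩)) :
    G.pathRange (Nat.mul_pos hk hn) (G.concat hn g hadj) = G.pathRange hn (g ⟨0, hk⟩) :=
  congrArg G.r (G.concat_apply hn g hadj (Nat.mul_pos hk hn) hk hn (by omega))

lemma pathSource_concat {n k : ℕ} (hn : 0 < n) (hk : 0 < k) (g : Fin k → G.Path n)
    (hadj : ∀ (j : ℕ) (hj : j + 1 < k),
      G.pathSource hn (g ⟨j, Nat.lt_of_succ_lt hj⟩) = G.pathRange hn (g ⟨j + 1, hj⟩)) :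
    G.pathSource (Nat.mul_pos hk hn) (G.concat hn g hadj)
      = G.pathSource hn (g ⟨k - 1, Nat.sub_lt hk Nat.one_pos⟩) := by
  have he : k * n - 1 = (k - 1) * n + (n - 1) := by
    have h1 : k = (k - 1) + 1 := by omega
    have h2 : k * n = (k - 1) * n + n := by
      conv_lhs => rw [h1]
      rw [Nat.add_mul, Nat.one_mul]
    omega
  exact congrArg G.s (G.concat_apply hn g hadj (Nat.sub_lt (Nat.mul_pos hk hn) Nat.one_pos)
    (Nat.sub_lt hk Nat.one_pos) (Nat.sub_lt hn Nat.one_pos) he)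

/-- Local continuous sections of `s^n` through any path, with values in a
prescribed open neighbourhood. -/
lemma exists_section {n : ℕ} (hn : 0 < n) (μ : G.Path n) (N : Set (G.Path n))
    (hN : IsOpen N) (hμN : μ ∈ N) :
    ∃ (W : Set V) (τ : V → G.Path n), IsOpen W ∧ G.pathSource hn μ ∈ W ∧
      ContinuousOn τ W ∧ (∀ w ∈ W, τ w ∈ N ∧ G.pathSource hn (τ w) = w) ∧
      τ (G.pathSource hn μ) = μ := by
  classical
  choose e hmem hfeq using fun i : Fin n => G.s_locHomeo (μ.1 i)
  set σ : Fin n → V → E := fun i => (e i).symm with hσdef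
  set D : Fin n → Set V := fun i => (e i).target with hDdef
  have hDopen : ∀ i, IsOpen (D i) := fun i => (e i).open_target
  have hσcont : ∀ i, ContinuousOn (σ i) (D i) := fun i => (e i).continuousOn_symm
  have hsfix : ∀ i, ∀ w ∈ D i, G.s (σ i w) = w := fun i w hw => by
    rw [hfeq i]; exact (e i).right_inv hw
  have hsmem : ∀ i, G.s (μ.1 i) ∈ D i := fun i => by
    rw [hfeq i]; exact (e i).map_source (hmem i)
  have hsback : ∀ i, σ i (G.s (μ.1 i)) = μ.1 i := fun i => by
    rw [hfeq i]; exact (e i).left_inv (hmem i)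
  set en : Fin n := ⟨n - 1, Nat.sub_lt hn Nat.one_pos⟩ with hen
  set ix : ℕ → Fin n := fun j => ⟨n - 2 - j, by omega⟩ with hix
  set h : ℕ → V → E := fun j =>
    Nat.rec (motive := fun _ => V → E) (σ en) (fun j hj w => σ (ix j) (G.r (hj w))) j with hh
  have hsucc : ∀ j w, h (j + 1) w = σ (ix j) (G.r (h j w)) := fun j w => rfl
  set A : ℕ → Set V := fun j =>
    Nat.rec (motive := fun _ => Set V) (D en)
      (fun j Aj => Aj ∩ {w | G.r (h j w) ∈ D (ix j)}) j with hA
  have Asucc : ∀ j, A (j + 1) = A j ∩ {w | G.r (h j w) ∈ D (ix j)} := fun j => rfl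
  have main : ∀ j, IsOpen (A j) ∧ ContinuousOn (h j) (A j) := by
    intro j
    induction j with
    | zero => exact ⟨hDopen en, hσcont en⟩
    | succ j ih =>
      have hrc : ContinuousOn (fun w => G.r (h j w)) (A j) := G.r_cont.comp_continuousOn ih.2
      refine ⟨hrc.isOpen_inter_preimage ih.1 (hDopen (ix j)), ?_⟩
      exact ContinuousOn.comp (hσcont (ix j)) (hrc.mono Set.inter_subset_left)
        (fun w hw => hw.2)
  have Amono : ∀ j j', j' ≤ j → A j ⊆ A j' := by
    intro j
    induction j with
    | zero =>
      intro j' hj'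
      rw [Nat.le_zero.mp hj']
    | succ j ih =>
      intro j' hj'
      rcases Nat.lt_or_ge j' (j + 1) with hc | hc
      · exact Set.Subset.trans Set.inter_subset_left (ih j' (by omega))
      · have : j' = j + 1 := by omega
        rw [this]
  have hs0 : ∀ w ∈ A 0, G.s (h 0 w) = w := fun w hw => hsfix en w hw
  have hschain : ∀ j w, w ∈ A (j + 1) → G.s (h (j + 1) w) = G.r (h j w) := fun j w hw =>
    hsfix (ix j) _ hw.2
  have Q : ∀ j, j ≤ n - 1 →
      (G.pathSource hn μ) ∈ A j ∧ h j (G.pathSource hn μ) = μ.1 ⟨n - 1 - j, by omega⟩ := by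
    intro j
    induction j with
    | zero => exact fun _ => ⟨hsmem en, hsback en⟩
    | succ j ih =>
      intro hj
      obtain ⟨hmemA, hval⟩ := ih (by omega)
      have hpath : G.s (μ.1 (ix j)) = G.r (μ.1 ⟨n - 1 - j, by omega⟩) := by
        have hp := μ.2 (n - 2 - j) (show n - 2 - j + 1 < n by omega)
        rw [show G.s (μ.1 (ix j)) = G.s (μ.1 ⟨n - 2 - j, by omega⟩) from rfl, hp]
        exact congrArg _ (fin_app_congr μ.1 (by omega) (by omega) (by omega))
      have hr : G.r (h j (G.pathSource hn μ)) = G.s (μ.1 (ix j)) := by rw [hval, ← hpath]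
      refine ⟨⟨hmemA, ?_⟩, ?_⟩
      · show G.r (h j (G.pathSource hn μ)) ∈ D (ix j)
        rw [hr]; exact hsmem (ix j)
      · show σ (ix j) (G.r (h j (G.pathSource hn μ))) = _
        rw [hr, hsback (ix j)]
        exact fin_app_congr μ.1 (by omega) (by omega) (by omega)
  set F : V → (Fin n → E) := fun w i => h (n - 1 - (i : ℕ)) w with hFdef
  have hFcont : ContinuousOn F (A (n - 1)) := by
    rw [continuousOn_pi]
    exact fun i => (main (n - 1 - (i : ℕ))).2.mono (Amono (n - 1) _ (by omega))
  have hFpath : ∀ w ∈ A (n - 1), G.IsPathFn (F w) := by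
    intro w hw i hi
    show G.s (h (n - 1 - i) w) = G.r (h (n - 1 - (i + 1)) w)
    have hidx : n - 1 - i = (n - 1 - (i + 1)) + 1 := by omega
    rw [hidx]
    exact hschain (n - 1 - (i + 1)) w
      (Amono (n - 1) ((n - 1 - (i + 1)) + 1) (by omega) hw)
  set τ : V → G.Path n :=
    fun w => if hw : w ∈ A (n - 1) then ⟨F w, hFpath w hw⟩ else μ with hτdef
  have hτpos : ∀ w (hw : w ∈ A (n - 1)), τ w = ⟨F w, hFpath w hw⟩ := fun w hw => dif_pos hw
  have hτcont : ContinuousOn τ (A (n - 1)) := by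
    exact (Topology.IsInducing.subtypeVal (t := {μ : Fin n → E | G.IsPathFn μ})).continuousOn_iff.2
      (hFcont.congr fun w hw => congrArg Subtype.val (hτpos w hw))
  have hsrc : ∀ w ∈ A (n - 1), G.pathSource hn (τ w) = w := by
    intro w hw
    have h1 : (τ w).1 ⟨n - 1, Nat.sub_lt hn Nat.one_pos⟩ = h 0 w := by
      rw [hτpos w hw]
      show h (n - 1 - (n - 1)) w = h 0 w
      rw [Nat.sub_self]
    exact (congrArg G.s h1).trans (hs0 w (Amono (n - 1) 0 (Nat.zero_le _) hw))
  have hv0 : G.pathSource hn μ ∈ A (n - 1) := (Q (n - 1) le_rfl).1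
  have hτμ : τ (G.pathSource hn μ) = μ := by
    apply Subtype.ext
    funext i
    rw [hτpos _ hv0]
    show h (n - 1 - (i : ℕ)) (G.pathSource hn μ) = μ.1 i
    rw [(Q (n - 1 - (i : ℕ)) (by omega)).2]
    exact fin_app_congr μ.1 (by have := i.2; omega) (by omega) i.2
  refine ⟨A (n - 1) ∩ {w | τ w ∈ N}, τ, ?_, ⟨hv0, ?_⟩, hτcont.mono Set.inter_subset_left,
    fun w hw => ⟨hw.2, hsrc w hw.1⟩, hτμ⟩
  · exact hτcont.isOpen_inter_preimage (main (n - 1)).1 hN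
  · show τ (G.pathSource hn μ) ∈ N
    rw [hτμ]; exact hμN

lemma eq_cycle_of_range {n : ℕ} (hn : 0 < n) (γ : G.Path n) (hc : G.IsCycle hn γ)
    (hne : ¬ G.HasEntrance γ) (x : G.Path n) (h0 : G.pathRange hn x = G.pathRange hn γ) :
    x = γ := by
  apply Subtype.ext
  funext i
  have key := G.follows_cycle hn γ hc hne x.1 x.2 (fun _ => h0) i i.2
  rw [show x.1 i = x.1 ⟨(i : ℕ), i.2⟩ from rfl, key]
  exact fin_app_congr γ.1 (Nat.mod_eq_of_lt i.2) (Nat.mod_lt _ hn) i.2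

lemma source_eq_of_follows {n m : ℕ} (hn : 0 < n) (hm : 0 < m) (γ : G.Path n)
    (hc : G.IsCycle hn γ) (hne : ¬ G.HasEntrance γ) (x : G.Path m) (hmn : m % n = 0)
    (h0 : G.pathRange hm x = G.pathRange hn γ) :
    G.pathSource hm x = G.pathRange hn γ := by
  have key := G.follows_cycle hn γ hc hne x.1 x.2 (fun _ => h0) (m - 1)
    (Nat.sub_lt hm Nat.one_pos)
  have hidx : (m - 1) % n = n - 1 := by
    obtain ⟨q, hq⟩ := Nat.dvd_of_mod_eq_zero hmn
    have hq1 : 0 < q := by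
      rcases Nat.eq_zero_or_pos q with h | h
      · subst h; rw [Nat.mul_zero] at hq; omega
      · exact h
    have h2 : n * q = n * (q - 1) + n := by
      conv_lhs => rw [show q = (q - 1) + 1 by omega]
      rw [Nat.mul_add, Nat.mul_one]
    have h3 : m - 1 = n * (q - 1) + (n - 1) := by omega
    rw [h3, Nat.mul_add_mod, Nat.mod_eq_of_lt (by omega)]
  have h4 : G.pathSource hm x = G.s (γ.1 ⟨(m - 1) % n, Nat.mod_lt _ hn⟩) := congrArg G.s key
  rw [h4, fin_app_congr γ.1 hidx (Nat.mod_lt _ hn) (Nat.sub_lt hn Nat.one_pos)]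
  exact hc.symm

lemma blocksIn_range_mem {n : ℕ} (hn : 0 < n) (W : Set V) {k : ℕ} (hk : 0 < k)
    (α : G.Path (k * n)) (hα : G.BlocksIn (G.pathRange hn ⁻¹' W) α) :
    G.pathRange (Nat.mul_pos hk hn) α ∈ W := by
  have h1 := hα ⟨0, hk⟩
  have h2 : G.pathRange (Nat.mul_pos hk hn) α = G.pathRange hn (G.block α ⟨0, hk⟩) :=
    congrArg G.r (fin_app_congr α.1 (by simp) (Nat.mul_pos hk hn)
      (block_lt ⟨0, hk⟩ ⟨0, hn⟩))
  rw [h2]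
  exact h1

/-- If the range of a path lies in `V_n` then the path lies in `B^n`. -/
lemma mem_B_of_range_mem {n : ℕ} (hn : 0 < n) (μ : G.Path n)
    (h : G.pathRange hn μ ∈ G.Vset n hn) : μ ∈ G.B n hn := by
  obtain ⟨W, hWopen, hvW, hWcyc⟩ := h
  choose cyc hcyc hcne hcr using hWcyc
  have huniq : ∀ (x : G.Path n) (hx : G.pathRange hn x ∈ W),
      G.IsCycle hn x ∧ ¬ G.HasEntrance x := by
    intro x hx
    have hx0 : G.pathRange hn x = G.pathRange hn (cyc _ hx) := by rw [hcr]
    have hxe := G.eq_cycle_of_range hn (cyc _ hx) (hcyc _ hx) (hcne _ hx) x hx0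
    exact ⟨by rw [hxe]; exact hcyc _ hx, by rw [hxe]; exact hcne _ hx⟩
  have hNopen : IsOpen (G.pathRange hn ⁻¹' W) := hWopen.preimage (G.continuous_pathRange hn)
  -- source of any kN-path with range in W is its own range
  have hsource : ∀ {k : ℕ} (hk : 0 < k) (α : G.Path (k * n)),
      G.BlocksIn (G.pathRange hn ⁻¹' W) α →
      G.pathSource (Nat.mul_pos hk hn) α = G.pathRange (Nat.mul_pos hk hn) α := by
    intro k hk α hα
    have hαW := G.blocksIn_range_mem hn W hk α hα
    have h0 : G.pathRange (Nat.mul_pos hk hn) α = G.pathRange hn (cyc _ hαW) := by rw [hcr]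
    exact (G.source_eq_of_follows hn (Nat.mul_pos hk hn) (cyc _ hαW) (hcyc _ hαW)
      (hcne _ hαW) α (Nat.mul_mod_left k n) h0).trans (hcr _ hαW)
  refine ⟨(huniq μ hvW).1, 1, Nat.one_pos, G.pathRange hn ⁻¹' W, hNopen, hvW, ?_, ?_⟩
  · rintro α β hα hβ hαβ ⟨γ, hγN, hγr, hγs⟩
    apply hαβ
    -- ranges of α, β in W
    have hαW := G.blocksIn_range_mem hn W Nat.one_pos α hα
    have hβW := G.blocksIn_range_mem hn W Nat.one_pos β hβ
    -- γ has range pathSource α = pathRange α ∈ W, γ is a cycle, so its source is also there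
    have hγW : G.pathRange hn γ ∈ W := by
      rw [hγr, hsource Nat.one_pos α hα]
      exact hαW
    have hγeq := G.eq_cycle_of_range hn (cyc _ hγW) (hcyc _ hγW) (hcne _ hγW) γ
      (by rw [hcr])
    have hγcyc : G.IsCycle hn γ := (huniq γ hγW).1
    -- pathRange β = pathRange α
    have hrange : G.pathRange (Nat.mul_pos Nat.one_pos hn) β
        = G.pathRange (Nat.mul_pos Nat.one_pos hn) α := by
      have e1 : G.pathSource hn γ = G.pathRange hn γ := hγcyc.symm
      have e2 := hsource Nat.one_pos β hβ
      have e3 := hsource Nat.one_pos α hα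
      rw [← e2, ← hγs, e1, hγr, e3]
    -- both α and β follow the entrance-free cycle at pathRange α
    have hcα : G.pathRange (Nat.mul_pos Nat.one_pos hn) α = G.pathRange hn (cyc _ hαW) := by
      rw [hcr]
    have hcβ : G.pathRange (Nat.mul_pos Nat.one_pos hn) β = G.pathRange hn (cyc _ hαW) := by
      rw [hrange, hcr]
    apply Subtype.ext
    funext i
    have k1 := G.follows_cycle hn (cyc _ hαW) (hcyc _ hαW) (hcne _ hαW) α.1 α.2
      (fun _ => hcα) i i.2
    have k2 := G.follows_cycle hn (cyc _ hαW) (hcyc _ hαW) (hcne _ hαW) β.1 β.2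
      (fun _ => hcβ) i i.2
    rw [show α.1 i = α.1 ⟨(i : ℕ), i.2⟩ from rfl, show β.1 i = β.1 ⟨(i : ℕ), i.2⟩ from rfl,
      k1, k2]
  · rintro α hα ⟨γ, hγN, hγcyc, hγent, hγr⟩
    exact (huniq γ hγN).2 hγent

/-- If a path lies in `B^n` then its range lies in `V_n`. -/
lemma range_mem_Vset_of_mem_B {n : ℕ} (hn : 0 < n) (μ : G.Path n) (hμ : μ ∈ G.B n hn) :
    G.pathRange hn μ ∈ G.Vset n hn := by
  obtain ⟨hcyc, k, hk, N, hNopen, hμN, cond1, cond2⟩ := hμ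
  obtain ⟨W₀, τ, hW₀open, hvW₀, hτcont, hτprop, hτμ⟩ := G.exists_section hn μ N hNopen hμN
  set g : V → V := fun w => G.pathRange hn (τ w) with hgdef
  have hgv : g (G.pathSource hn μ) = G.pathSource hn μ := by
    show G.pathRange hn (τ (G.pathSource hn μ)) = G.pathSource hn μ
    rw [hτμ]
    exact hcyc
  set U : ℕ → Set V := fun j =>
    Nat.rec (motive := fun _ => Set V) W₀ (fun _ Uj => Uj ∩ {w | g w ∈ Uj}) j with hUdef
  have hUfacts : ∀ j, IsOpen (U j) ∧ U j ⊆ W₀ ∧ G.pathSource hn μ ∈ U j := by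
    intro j
    induction j with
    | zero => exact ⟨hW₀open, subset_rfl, hvW₀⟩
    | succ j ih =>
      have hgc : ContinuousOn g (U j) :=
        (G.continuous_pathRange hn).comp_continuousOn (hτcont.mono ih.2.1)
      refine ⟨hgc.isOpen_inter_preimage ih.1 ih.1,
        Set.Subset.trans Set.inter_subset_left ih.2.1, ih.2.2, ?_⟩
      show g (G.pathSource hn μ) ∈ U j
      rw [hgv]
      exact ih.2.2
  rw [show G.pathRange hn μ = G.pathSource hn μ from hcyc]
  refine ⟨U k, (hUfacts k).1, (hUfacts k).2.2, ?_⟩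
  intro w hw
  have hws : ∀ j, j ≤ k → g^[j] w ∈ U (k - j) := by
    intro j
    induction j with
    | zero => exact fun _ => hw
    | succ j ih =>
      intro hj
      have h1 := ih (by omega)
      rw [show k - j = (k - (j + 1)) + 1 by omega] at h1
      rw [Function.iterate_succ_apply']
      exact h1.2
  have hmem : ∀ j, j ≤ k → g^[j] w ∈ W₀ := fun j hj => (hUfacts (k - j)).2.1 (hws j hj)
  have hmemN : ∀ j, j ≤ k → τ (g^[j] w) ∈ N := fun j hj => (hτprop _ (hmem j hj)).1
  have hsrc : ∀ j, j ≤ k → G.pathSource hn (τ (g^[j] w)) = g^[j] w :=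
    fun j hj => (hτprop _ (hmem j hj)).2
  -- the two concatenations
  have hadjA : ∀ (j : ℕ) (hj : j + 1 < k),
      G.pathSource hn (τ (g^[k - (j : ℕ)] w)) = G.pathRange hn (τ (g^[k - ((j : ℕ) + 1)] w)) := by
    intro j hj
    rw [hsrc (k - j) (by omega)]
    show g^[k - j] w = g (g^[k - (j + 1)] w)
    rw [show k - j = (k - (j + 1)) + 1 by omega, Function.iterate_succ_apply']
  have hadjB : ∀ (j : ℕ) (hj : j + 1 < k),
      G.pathSource hn (τ (g^[k - 1 - (j : ℕ)] w))
        = G.pathRange hn (τ (g^[k - 1 - ((j : ℕ) + 1)] w)) := by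
    intro j hj
    rw [hsrc (k - 1 - j) (by omega)]
    show g^[k - 1 - j] w = g (g^[k - 1 - (j + 1)] w)
    rw [show k - 1 - j = (k - 1 - (j + 1)) + 1 by omega, Function.iterate_succ_apply']
  set gA : Fin k → G.Path n := fun j => τ (g^[k - (j : ℕ)] w) with hgA
  set gB : Fin k → G.Path n := fun j => τ (g^[k - 1 - (j : ℕ)] w) with hgB
  have hadjA' : ∀ (j : ℕ) (hj : j + 1 < k),
      G.pathSource hn (gA ⟨j, Nat.lt_of_succ_lt hj⟩) = G.pathRange hn (gA ⟨j + 1, hj⟩) :=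
    fun j hj => hadjA j hj
  have hadjB' : ∀ (j : ℕ) (hj : j + 1 < k),
      G.pathSource hn (gB ⟨j, Nat.lt_of_succ_lt hj⟩) = G.pathRange hn (gB ⟨j + 1, hj⟩) :=
    fun j hj => hadjB j hj
  have hblA : G.BlocksIn N (G.concat hn gA hadjA') := by
    intro j
    rw [G.block_concat hn gA hadjA' j]
    exact hmemN (k - (j : ℕ)) (by omega)
  have hblB : G.BlocksIn N (G.concat hn gB hadjB') := by
    intro j
    rw [G.block_concat hn gB hadjB' j]
    exact hmemN (k - 1 - (j : ℕ)) (by omega)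
  have hsA : G.pathSource (Nat.mul_pos hk hn) (G.concat hn gA hadjA') = g w := by
    rw [G.pathSource_concat hn hk gA hadjA']
    show G.pathSource hn (τ (g^[k - (k - 1)] w)) = g w
    rw [show k - (k - 1) = 1 by omega, hsrc 1 (by omega), Function.iterate_one]
  have hsB : G.pathSource (Nat.mul_pos hk hn) (G.concat hn gB hadjB') = w := by
    rw [G.pathSource_concat hn hk gB hadjB']
    show G.pathSource hn (τ (g^[k - 1 - (k - 1)] w)) = w
    rw [show k - 1 - (k - 1) = 0 by omega, hsrc 0 (by omega), Function.iterate_zero_apply]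
  have hwW₀ : w ∈ W₀ := hmem 0 (by omega)
  -- conclude g w = w using condition (1)
  have hABeq : G.concat hn gA hadjA' = G.concat hn gB hadjB' := by
    by_contra hne
    refine cond1 (G.concat hn gA hadjA') (G.concat hn gB hadjB') hblA hblB hne
      ⟨τ w, (hτprop w hwW₀).1, ?_, ?_⟩
    · rw [hsA]
    · rw [hsB]
      exact (hτprop w hwW₀).2
  have hgw : g w = w := by
    have h1 : gA ⟨k - 1, Nat.sub_lt hk Nat.one_pos⟩ = gB ⟨k - 1, Nat.sub_lt hk Nat.one_pos⟩ := by
      rw [← G.block_concat hn gA hadjA' ⟨k - 1, Nat.sub_lt hk Nat.one_pos⟩,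
        ← G.block_concat hn gB hadjB' ⟨k - 1, Nat.sub_lt hk Nat.one_pos⟩, hABeq]
    have h2 := congrArg (G.pathSource hn) h1
    have e1 : G.pathSource hn (gA ⟨k - 1, Nat.sub_lt hk Nat.one_pos⟩) = g w := by
      show G.pathSource hn (τ (g^[k - (k - 1)] w)) = g w
      rw [show k - (k - 1) = 1 by omega, hsrc 1 (by omega), Function.iterate_one]
    have e2 : G.pathSource hn (gB ⟨k - 1, Nat.sub_lt hk Nat.one_pos⟩) = w := by
      show G.pathSource hn (τ (g^[k - 1 - (k - 1)] w)) = w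
      rw [show k - 1 - (k - 1) = 0 by omega, hsrc 0 (by omega), Function.iterate_zero_apply]
    rw [e1, e2] at h2
    exact h2
  -- τ w is a cycle based at w
  have hτwr : G.pathRange hn (τ w) = w := hgw
  have hτws : G.pathSource hn (τ w) = w := (hτprop w hwW₀).2
  have hτwcyc : G.IsCycle hn (τ w) := hτwr.trans hτws.symm
  -- τ w has no entrance, using condition (2)
  have hadjC : ∀ (j : ℕ) (hj : j + 1 < k),
      G.pathSource hn ((fun _ : Fin k => τ w) ⟨j, Nat.lt_of_succ_lt hj⟩)
        = G.pathRange hn ((fun _ : Fin k => τ w) ⟨j + 1, hj⟩) :=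
    fun j hj => hτws.trans hτwr.symm
  have hblC : G.BlocksIn N (G.concat hn (fun _ => τ w) hadjC) := by
    intro j
    rw [G.block_concat hn (fun _ => τ w) hadjC j]
    exact (hτprop w hwW₀).1
  have hsC : G.pathSource (Nat.mul_pos hk hn) (G.concat hn (fun _ => τ w) hadjC) = w := by
    rw [G.pathSource_concat hn hk (fun _ => τ w) hadjC]
    exact hτws
  have hτwne : ¬ G.HasEntrance (τ w) := by
    intro hent
    exact cond2 (G.concat hn (fun _ => τ w) hadjC) hblC
      ⟨τ w, (hτprop w hwW₀).1, hτwcyc, hent, hτwr.trans hsC.symm⟩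
  exact ⟨τ w, hτwcyc, hτwne, hτwr⟩

end TopGraph

end AuxStmt2



/-- Theorem 3.8, first part: `r^n(B^n) = V_n` and `B^n = (r^n)⁻¹(V_n)`. -/
theorem stmt2 {V E : Type} [TopologicalSpace V] [TopologicalSpace E]
    [T2Space V] [T2Space E] [LocallyCompactSpace V] [LocallyCompactSpace E]
    [SecondCountableTopology V] [SecondCountableTopology E]
    (G : TopGraph V E)
    (n : ℕ) (hn : 0 < n) :
    G.pathRange hn '' G.B n hn = G.Vset n hn ∧
    G.B n hn = G.pathRange hn ⁻¹' G.Vset n hn := by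
  constructor
  · apply Set.eq_of_subset_of_subset
    · rintro v ⟨μ, hμ, rfl⟩
      exact G.range_mem_Vset_of_mem_B hn μ hμ
    · intro v hv
      obtain ⟨W, hWopen, hvW, hWc⟩ := hv
      obtain ⟨γ, hγc, hγne, hγr⟩ := hWc v hvW
      refine ⟨γ, G.mem_B_of_range_mem hn γ ?_, hγr⟩
      rw [hγr]
      exact ⟨W, hWopen, hvW, hWc⟩
  · apply Set.eq_of_subset_of_subset
    · exact fun μ hμ => G.range_mem_Vset_of_mem_B hn μ hμ
    · exact fun μ hμ => G.mem_B_of_range_mem hn μ hμ
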